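/- Consequence of the double-sum formula for two values of p: for admissible d and 0 ≤ p, p' ≤ d with q = d−p, q' = d−p', one has (−1)^{p(m−d)} Sylv^{p,q}(A,B;x)/C(d,p) = (−1)^{p'(m−d)} Sylv^{p',q'}(A,B;x)/C(d,p'); in particular C(d,p)·Sylv^{d,0}(A,B;x) = (−1)^{(d−p)(m−d)}·Sylv^{p,d−p}(A,B;x). -/

import Mathlib

open Polynomial Matrix Finset

/-- Sylvester's double sum Sylv^{p,q}(A,B;x), as an element of F[X]:
Σ_{|A'|=p, |B'|=q} R(x,A') R(x,B') · R(A',B') R(A∖A',B∖B') / (R(A',A∖A') R(B',B∖B')). -/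
noncomputable def sylv {F : Type*} [Field F] {m n : ℕ} (A : Fin m → F) (B : Fin n → F)
    (p q : ℕ) : Polynomial F :=
  ∑ A' ∈ Finset.powersetCard p (Finset.univ : Finset (Fin m)),
    ∑ B' ∈ Finset.powersetCard q (Finset.univ : Finset (Fin n)),
      (∏ i ∈ A', (X - C (A i))) * (∏ j ∈ B', (X - C (B j))) *
        C ((∏ i ∈ A', ∏ j ∈ B', (A i - B j)) * (∏ i ∈ A'ᶜ, ∏ j ∈ B'ᶜ, (A i - B j)) /
            ((∏ i ∈ A', ∏ i' ∈ A'ᶜ, (A i - A i')) * (∏ j ∈ B', ∏ j' ∈ B'ᶜ, (B j - B j'))))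

section helpers
variable {F : Type*} [Field F]

lemma lagrangeL {ι : Type*} [DecidableEq ι] (s : Finset ι) (v : ι → F)
    (hv : Set.InjOn v s) (f : F[X]) (hdeg : f.natDegree + 2 ≤ s.card) :
    ∑ i ∈ s, f.eval (v i) / ∏ j ∈ s.erase i, (v i - v j) = 0 := by
  rcases eq_or_ne f 0 with rfl | hf
  · simp
  have hdlt : f.degree < (s.card : ℕ) := by
    rw [degree_eq_natDegree hf]
    exact_mod_cast by omega
  have hfi := Lagrange.eq_interpolate hv hdlt
  have hco : f.coeff (s.card - 1) = 0 := by
    apply coeff_eq_zero_of_degree_lt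
    rw [degree_eq_natDegree hf]
    exact_mod_cast by omega
  have hbasis : ∀ i ∈ s, (Lagrange.basis s v i).coeff (s.card - 1)
      = (∏ j ∈ s.erase i, (v i - v j))⁻¹ := by
    intro i hi
    have : Lagrange.basis s v i
        = C (∏ j ∈ s.erase i, (v i - v j)⁻¹) * ∏ j ∈ s.erase i, (X - C (v j)) := by
      rw [Lagrange.basis]
      simp_rw [Lagrange.basisDivisor]
      rw [Finset.prod_mul_distrib, _root_.map_prod]
    rw [this]
    have hmon : (∏ j ∈ s.erase i, (X - C (v j))).Monic :=
      monic_prod_of_monic _ _ fun j _ => monic_X_sub_C _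
    have hnd : (∏ j ∈ s.erase i, (X - C (v j))).natDegree = s.card - 1 := by
      rw [natDegree_prod_of_monic _ _ fun j _ => monic_X_sub_C _]
      simp [Finset.card_erase_of_mem hi]
    rw [coeff_C_mul, ← hnd, hmon.coeff_natDegree, mul_one, Finset.prod_inv_distrib]
  have := congrArg (fun g => Polynomial.coeff g (s.card - 1)) hfi
  simp only [Lagrange.interpolate_apply, Polynomial.finset_sum_coeff, coeff_C_mul] at this
  rw [hco] at this
  simp_rw [div_eq_mul_inv]
  rw [Finset.sum_congr rfl (fun i hi => by rw [hbasis i hi])] at this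
  exact this.symm

lemma negpow_congr {j k : ℕ} (h : j % 2 = k % 2) : ((-1 : F))^j = (-1)^k := by
  rcases Nat.even_or_odd j with hj | hj
  · have hk : Even k := by rw [Nat.even_iff] at hj ⊢; omega
    rw [hj.neg_one_pow, hk.neg_one_pow]
  · have hk : Odd k := by rw [Nat.odd_iff] at hj ⊢; omega
    rw [hj.neg_one_pow, hk.neg_one_pow]

lemma prod_neg' {ι : Type*} (s : Finset ι) (f : ι → F) :
    (∏ i ∈ s, f i) = (-1)^s.card * ∏ i ∈ s, -f i := by
  rw [Finset.prod_congr rfl (fun i _ => show -f i = (-1) * f i by ring),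
    Finset.prod_mul_distrib, Finset.prod_const]
  rw [← mul_assoc, ← mul_pow]
  simp

lemma erase_inl {α β : Type*} [Fintype α] [Fintype β] [DecidableEq α] [DecidableEq β]
    {M : Type*} [CommMonoid M] (a : α) (h : α ⊕ β → M) :
    ∏ x ∈ (univ : Finset (α ⊕ β)).erase (Sum.inl a), h x
      = (∏ x ∈ (univ : Finset α).erase a, h (Sum.inl x)) * ∏ y : β, h (Sum.inr y) := by
  rw [← Finset.prod_disjSum]
  apply Finset.prod_congr _ fun _ _ => rfl
  ext x
  cases x <;> simp

lemma erase_inr {α β : Type*} [Fintype α] [Fintype β] [DecidableEq α] [DecidableEq β]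
    {M : Type*} [CommMonoid M] (b : β) (h : α ⊕ β → M) :
    ∏ x ∈ (univ : Finset (α ⊕ β)).erase (Sum.inr b), h x
      = (∏ x : α, h (Sum.inl x)) * ∏ y ∈ (univ : Finset β).erase b, h (Sum.inr y) := by
  rw [← Finset.prod_disjSum]
  apply Finset.prod_congr _ fun _ _ => rfl
  ext x
  cases x <;> simp

lemma regroup {α : Type*} [Fintype α] [DecidableEq α] {M : Type*} [AddCommMonoid M]
    (q : ℕ) (f : Finset α → M) :
    ∑ t ∈ powersetCard (q+1) (univ : Finset α), (q+1) • f t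
      = ∑ t ∈ powersetCard q (univ : Finset α), ∑ b ∈ tᶜ, f (insert b t) := by
  have lhs : ∀ t ∈ powersetCard (q+1) (univ : Finset α), (q+1) • f t = ∑ b ∈ t, f t := by
    intro t ht
    rw [Finset.sum_const, Finset.mem_powersetCard_univ.1 ht]
  rw [Finset.sum_congr rfl lhs, Finset.sum_sigma', Finset.sum_sigma']
  apply Finset.sum_bij' (fun x _ => (⟨x.1.erase x.2, x.2⟩ : Σ _ : Finset α, α))
    (fun x _ => (⟨insert x.2 x.1, x.2⟩ : Σ _ : Finset α, α))
  · rintro ⟨t, b⟩ h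
    simp only [Finset.mem_sigma, Finset.mem_powersetCard_univ] at h ⊢
    refine ⟨?_, ?_⟩
    · rw [Finset.card_erase_of_mem h.2, h.1]; omega
    · simp [h.2]
  · rintro ⟨t, b⟩ h
    simp only [Finset.mem_sigma, Finset.mem_powersetCard_univ, Finset.mem_compl] at h ⊢
    exact ⟨by rw [Finset.card_insert_of_notMem h.2, h.1], Finset.mem_insert_self _ _⟩
  · rintro ⟨t, b⟩ h
    simp only [Finset.mem_sigma, Finset.mem_powersetCard_univ] at h
    simp [Finset.insert_erase h.2]
  · rintro ⟨t, b⟩ h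
    simp only [Finset.mem_sigma, Finset.mem_powersetCard_univ, Finset.mem_compl] at h
    simp [Finset.erase_insert h.2]
  · rintro ⟨t, b⟩ h
    simp only [Finset.mem_sigma, Finset.mem_powersetCard_univ] at h
    rw [Finset.insert_erase h.2]

end helpers

section main
variable {F : Type*} [Field F] {m n : ℕ} (A : Fin m → F) (B : Fin n → F)

/-- one summand of sylv -/
noncomputable def trm (A' : Finset (Fin m)) (B' : Finset (Fin n)) : Polynomial F :=
  (∏ i ∈ A', (X - C (A i))) * (∏ j ∈ B', (X - C (B j))) *
    C ((∏ i ∈ A', ∏ j ∈ B', (A i - B j)) * (∏ i ∈ A'ᶜ, ∏ j ∈ B'ᶜ, (A i - B j)) /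
        ((∏ i ∈ A', ∏ i' ∈ A'ᶜ, (A i - A i')) * (∏ j ∈ B', ∏ j' ∈ B'ᶜ, (B j - B j'))))

lemma sylv_eq (p q : ℕ) :
    sylv A B p q = ∑ A' ∈ powersetCard p (univ : Finset (Fin m)),
      ∑ B' ∈ powersetCard q (univ : Finset (Fin n)), trm A B A' B' := rfl

variable (hA : Function.Injective A) (hB : Function.Injective B)
    (hAB : ∀ i j, A i ≠ B j)


lemma central (hA : Function.Injective A) (hB : Function.Injective B)
    (hAB : ∀ i j, A i ≠ B j)
    (A₀ : Finset (Fin m)) (B₀ : Finset (Fin n))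
    (hcard : 2 * (A₀.card + B₀.card) + 3 ≤ m + n) :
    ∑ b ∈ B₀ᶜ, (X - C (B b)) * C ((((∏ i ∈ A₀, (B b - A i)) * ∏ j ∈ B₀, (B b - B j))^2)
        / ∏ t ∈ (univ : Finset (Fin m ⊕ Fin n)).erase (Sum.inr b), (B b - Sum.elim A B t))
      = - ∑ a ∈ A₀ᶜ, (X - C (A a)) * C ((((∏ i ∈ A₀, (A a - A i)) * ∏ j ∈ B₀, (A a - B j))^2)
        / ∏ t ∈ (univ : Finset (Fin m ⊕ Fin n)).erase (Sum.inl a), (A a - Sum.elim A B t)) := by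
  have hvInj : Function.Injective (Sum.elim A B) := by
    rintro (a | a) (b | b) h
    · exact congrArg Sum.inl (hA (by simpa using h))
    · exact absurd (show A a = B b by simpa using h) (hAB _ _)
    · exact absurd (show A b = B a by simpa using h.symm) (hAB _ _)
    · exact congrArg Sum.inr (hB (by simpa using h))
  set g : F[X] := ((∏ i ∈ A₀, (X - C (A i))) * ∏ j ∈ B₀, (X - C (B j)))^2 with hg
  have geval : ∀ y : F, g.eval y = ((∏ i ∈ A₀, (y - A i)) * ∏ j ∈ B₀, (y - B j))^2 := by
    intro y; simp [hg, eval_prod]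
  have hmon : ((∏ i ∈ A₀, (X - C (A i))) * ∏ j ∈ B₀, (X - C (B j))).Monic :=
    (monic_prod_of_monic _ _ fun i _ => monic_X_sub_C _).mul
      (monic_prod_of_monic _ _ fun j _ => monic_X_sub_C _)
  have hndbase : ((∏ i ∈ A₀, (X - C (A i))) * ∏ j ∈ B₀, (X - C (B j))).natDegree
      = A₀.card + B₀.card := by
    rw [(monic_prod_of_monic _ _ fun i _ => monic_X_sub_C (A i)).natDegree_mul
      (monic_prod_of_monic _ _ fun j _ => monic_X_sub_C (B j)),
      natDegree_prod_of_monic _ _ fun i _ => monic_X_sub_C _,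
      natDegree_prod_of_monic _ _ fun j _ => monic_X_sub_C _]
    simp [natDegree_X_sub_C]
  have hnd : g.natDegree = 2 * (A₀.card + B₀.card) := by
    rw [hg, hmon.natDegree_pow, hndbase]
  have hcarduniv : (univ : Finset (Fin m ⊕ Fin n)).card = m + n := by simp
  have L1 := lagrangeL univ (Sum.elim A B) hvInj.injOn g (by rw [hcarduniv]; omega)
  have hgmon : g.Monic := hg ▸ hmon.pow 2
  have L2 := lagrangeL univ (Sum.elim A B) hvInj.injOn (X * g)
    (by rw [hcarduniv, monic_X.natDegree_mul hgmon, natDegree_X, hnd]; omega)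
  have hS : ∑ t : Fin m ⊕ Fin n, (X - C (Sum.elim A B t)) * C (g.eval (Sum.elim A B t)
      / ∏ t' ∈ univ.erase t, (Sum.elim A B t - Sum.elim A B t')) = 0 := by
    have expand : ∀ (c e : F), (X - C c) * C e = X * C e - C (c * e) := by
      intro c e; rw [_root_.map_mul]; ring
    rw [Finset.sum_congr rfl (fun t _ => expand _ _), Finset.sum_sub_distrib,
      ← Finset.mul_sum, ← _root_.map_sum, ← _root_.map_sum, L1]
    have : ∀ t ∈ (univ : Finset (Fin m ⊕ Fin n)), Sum.elim A B t * (g.eval (Sum.elim A B t)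
        / ∏ t' ∈ univ.erase t, (Sum.elim A B t - Sum.elim A B t'))
        = (X * g).eval (Sum.elim A B t)
          / ∏ t' ∈ univ.erase t, (Sum.elim A B t - Sum.elim A B t') := by
      intro t _
      rw [eval_mul, eval_X, mul_div_assoc]
    rw [Finset.sum_congr rfl this, L2]
    simp
  rw [Fintype.sum_sum_type] at hS
  simp only [Sum.elim_inl, Sum.elim_inr] at hS
  simp only [geval] at hS
  have hBext : ∑ b ∈ B₀ᶜ, (X - C (B b)) * C ((((∏ i ∈ A₀, (B b - A i)) * ∏ j ∈ B₀, (B b - B j))^2)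
        / ∏ t ∈ (univ : Finset (Fin m ⊕ Fin n)).erase (Sum.inr b), (B b - Sum.elim A B t))
      = ∑ b : Fin n, (X - C (B b)) * C ((((∏ i ∈ A₀, (B b - A i)) * ∏ j ∈ B₀, (B b - B j))^2)
        / ∏ t ∈ (univ : Finset (Fin m ⊕ Fin n)).erase (Sum.inr b), (B b - Sum.elim A B t)) := by
    apply Finset.sum_subset (Finset.subset_univ _)
    intro b _ hb
    rw [Finset.mem_compl, not_not] at hb
    rw [Finset.prod_eq_zero hb (sub_self (B b))]
    simp
  have hAext : ∑ a ∈ A₀ᶜ, (X - C (A a)) * C ((((∏ i ∈ A₀, (A a - A i)) * ∏ j ∈ B₀, (A a - B j))^2)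
        / ∏ t ∈ (univ : Finset (Fin m ⊕ Fin n)).erase (Sum.inl a), (A a - Sum.elim A B t))
      = ∑ a : Fin m, (X - C (A a)) * C ((((∏ i ∈ A₀, (A a - A i)) * ∏ j ∈ B₀, (A a - B j))^2)
        / ∏ t ∈ (univ : Finset (Fin m ⊕ Fin n)).erase (Sum.inl a), (A a - Sum.elim A B t)) := by
    apply Finset.sum_subset (Finset.subset_univ _)
    intro a _ ha
    rw [Finset.mem_compl, not_not] at ha
    rw [Finset.prod_eq_zero ha (sub_self (A a))]
    simp
  rw [hBext, hAext]
  linear_combination hS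



lemma key_b (hA : Function.Injective A) (hB : Function.Injective B)
    (hAB : ∀ i j, A i ≠ B j) (A₀ : Finset (Fin m)) (B₀ : Finset (Fin n))
    (b : Fin n) (hb : b ∈ B₀ᶜ) :
    trm A B A₀ (insert b B₀)
      = C ((-1:F)^(A₀.card + A₀ᶜ.card + B₀.card)
          * ((∏ i ∈ A₀, ∏ j ∈ B₀, (A i - B j)) * (∏ i ∈ A₀ᶜ, ∏ j ∈ B₀ᶜ, (A i - B j))
            / ((∏ i ∈ A₀, ∏ i' ∈ A₀ᶜ, (A i - A i')) * (∏ j ∈ B₀, ∏ j' ∈ B₀ᶜ, (B j - B j')))))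
        * ((∏ i ∈ A₀, (X - C (A i))) * (∏ j ∈ B₀, (X - C (B j)))
          * ((X - C (B b)) * C ((((∏ i ∈ A₀, (B b - A i)) * ∏ j ∈ B₀, (B b - B j))^2)
              / ∏ t ∈ (univ : Finset (Fin m ⊕ Fin n)).erase (Sum.inr b),
                  (B b - Sum.elim A B t)))) := by
  have hbB : b ∉ B₀ := by simpa using hb
  have hBA : ∀ (j : Fin n) (i : Fin m), B j - A i ≠ 0 :=
    fun j i => sub_ne_zero.2 fun h => hAB i j h.symm
  have ha1 : (∏ i ∈ A₀, (B b - A i)) ≠ 0 :=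
    Finset.prod_ne_zero_iff.2 fun i _ => hBA b i
  have ha2 : (∏ i ∈ A₀ᶜ, (B b - A i)) ≠ 0 :=
    Finset.prod_ne_zero_iff.2 fun i _ => hBA b i
  have hb1 : (∏ j ∈ B₀, (B b - B j)) ≠ 0 :=
    Finset.prod_ne_zero_iff.2 fun j hj => sub_ne_zero.2 fun h => hbB ((hB h) ▸ hj)
  have hb2 : (∏ j' ∈ B₀ᶜ.erase b, (B b - B j')) ≠ 0 :=
    Finset.prod_ne_zero_iff.2 fun j' hj' =>
      sub_ne_zero.2 fun h => (Finset.mem_erase.1 hj').1 (hB h).symm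
  have hN1 : (∏ i ∈ A₀, ∏ i' ∈ A₀ᶜ, (A i - A i')) ≠ 0 :=
    Finset.prod_ne_zero_iff.2 fun i hi => Finset.prod_ne_zero_iff.2 fun i' hi' =>
      sub_ne_zero.2 fun h => (Finset.mem_compl.1 hi') ((hA h) ▸ hi)
  have hE : (∏ j ∈ B₀, ∏ j' ∈ B₀ᶜ.erase b, (B j - B j')) ≠ 0 :=
    Finset.prod_ne_zero_iff.2 fun j hj => Finset.prod_ne_zero_iff.2 fun j' hj' =>
      sub_ne_zero.2 fun h =>
        (Finset.mem_compl.1 (Finset.mem_of_mem_erase hj')) ((hB h) ▸ hj)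
  have hK2 : (∏ i ∈ A₀ᶜ, ∏ j ∈ B₀ᶜ, (A i - B j))
      = (∏ i ∈ A₀ᶜ, (A i - B b)) * ∏ i ∈ A₀ᶜ, ∏ j ∈ B₀ᶜ.erase b, (A i - B j) := by
    rw [← Finset.prod_mul_distrib]
    exact Finset.prod_congr rfl fun i _ => (Finset.mul_prod_erase _ _ hb).symm
  have hRBB : (∏ j ∈ B₀, ∏ j' ∈ B₀ᶜ, (B j - B j'))
      = (∏ j ∈ B₀, (B j - B b)) * ∏ j ∈ B₀, ∏ j' ∈ B₀ᶜ.erase b, (B j - B j') := by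
    rw [← Finset.prod_mul_distrib]
    exact Finset.prod_congr rfl fun j _ => (Finset.mul_prod_erase _ _ hb).symm
  have hsub : B₀ ⊆ (univ : Finset (Fin n)).erase b :=
    fun x hx => Finset.mem_erase.2 ⟨fun hxb => hbB (hxb ▸ hx), Finset.mem_univ _⟩
  have hsd : ((univ : Finset (Fin n)).erase b) \ B₀ = B₀ᶜ.erase b := by
    ext x
    simp only [Finset.mem_sdiff, Finset.mem_erase, Finset.mem_univ, and_true,
      Finset.mem_compl]
  have hD : (∏ t ∈ (univ : Finset (Fin m ⊕ Fin n)).erase (Sum.inr b),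
        (B b - Sum.elim A B t))
      = ((∏ i ∈ A₀, (B b - A i)) * (∏ i ∈ A₀ᶜ, (B b - A i)))
        * ((∏ j ∈ B₀, (B b - B j)) * ∏ j' ∈ B₀ᶜ.erase b, (B b - B j')) := by
    rw [erase_inr b (fun t => B b - Sum.elim A B t)]
    simp only [Sum.elim_inl, Sum.elim_inr]
    rw [← Finset.prod_mul_prod_compl A₀ (fun i => B b - A i),
      ← Finset.prod_sdiff hsub, hsd]
    ring
  have hsign1 : (∏ i ∈ A₀, (A i - B b)) = (-1)^A₀.card * ∏ i ∈ A₀, (B b - A i) := by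
    rw [prod_neg' A₀ (fun i => A i - B b)]
    congr 1
    exact Finset.prod_congr rfl fun i _ => by ring
  have hsign2 : (∏ i ∈ A₀ᶜ, (A i - B b)) = (-1)^A₀ᶜ.card * ∏ i ∈ A₀ᶜ, (B b - A i) := by
    rw [prod_neg' A₀ᶜ (fun i => A i - B b)]
    congr 1
    exact Finset.prod_congr rfl fun i _ => by ring
  have hsign3 : (∏ j ∈ B₀, (B j - B b)) = (-1)^B₀.card * ∏ j ∈ B₀, (B b - B j) := by
    rw [prod_neg' B₀ (fun j => B j - B b)]
    congr 1
    exact Finset.prod_congr rfl fun j _ => by ring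
  rw [trm]
  simp only [Finset.compl_insert, Finset.prod_insert hbB, Finset.prod_mul_distrib]
  rw [hK2, hRBB, hD, hsign1, hsign2, hsign3, pow_add, pow_add]
  have hsc : ((-1)^A₀.card * ∏ i ∈ A₀, (B b - A i)) * (∏ i ∈ A₀, ∏ j ∈ B₀, (A i - B j))
        * (∏ i ∈ A₀ᶜ, ∏ j ∈ B₀ᶜ.erase b, (A i - B j))
        / ((∏ i ∈ A₀, ∏ i' ∈ A₀ᶜ, (A i - A i'))
          * ((∏ j' ∈ B₀ᶜ.erase b, (B b - B j'))
            * ∏ j ∈ B₀, ∏ j' ∈ B₀ᶜ.erase b, (B j - B j')))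
      = (-1)^A₀.card * (-1)^A₀ᶜ.card * (-1)^B₀.card
          * ((∏ i ∈ A₀, ∏ j ∈ B₀, (A i - B j))
            * (((-1)^A₀ᶜ.card * ∏ i ∈ A₀ᶜ, (B b - A i))
              * ∏ i ∈ A₀ᶜ, ∏ j ∈ B₀ᶜ.erase b, (A i - B j))
            / ((∏ i ∈ A₀, ∏ i' ∈ A₀ᶜ, (A i - A i'))
              * (((-1)^B₀.card * ∏ j ∈ B₀, (B b - B j))
                * ∏ j ∈ B₀, ∏ j' ∈ B₀ᶜ.erase b, (B j - B j'))))
          * (((∏ i ∈ A₀, (B b - A i)) * ∏ j ∈ B₀, (B b - B j))^2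
            / (((∏ i ∈ A₀, (B b - A i)) * (∏ i ∈ A₀ᶜ, (B b - A i)))
              * ((∏ j ∈ B₀, (B b - B j)) * ∏ j' ∈ B₀ᶜ.erase b, (B b - B j')))) := by
    rcases Nat.even_or_odd A₀.card with h1 | h1 <;>
      rcases Nat.even_or_odd A₀ᶜ.card with h2 | h2 <;>
        rcases Nat.even_or_odd B₀.card with h3 | h3 <;>
          simp only [h1.neg_one_pow, h2.neg_one_pow, h3.neg_one_pow] <;>
            field_simp <;> ring
  rw [hsc]
  simp only [_root_.map_mul]
  ring



lemma key_a (hA : Function.Injective A) (hB : Function.Injective B)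
    (hAB : ∀ i j, A i ≠ B j) (A₀ : Finset (Fin m)) (B₀ : Finset (Fin n))
    (a : Fin m) (ha : a ∈ A₀ᶜ) :
    trm A B (insert a A₀) B₀
      = C ((-1:F)^(A₀.card)
          * ((∏ i ∈ A₀, ∏ j ∈ B₀, (A i - B j)) * (∏ i ∈ A₀ᶜ, ∏ j ∈ B₀ᶜ, (A i - B j))
            / ((∏ i ∈ A₀, ∏ i' ∈ A₀ᶜ, (A i - A i')) * (∏ j ∈ B₀, ∏ j' ∈ B₀ᶜ, (B j - B j')))))
        * ((∏ i ∈ A₀, (X - C (A i))) * (∏ j ∈ B₀, (X - C (B j)))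
          * ((X - C (A a)) * C ((((∏ i ∈ A₀, (A a - A i)) * ∏ j ∈ B₀, (A a - B j))^2)
              / ∏ t ∈ (univ : Finset (Fin m ⊕ Fin n)).erase (Sum.inl a),
                  (A a - Sum.elim A B t)))) := by
  have haA : a ∉ A₀ := by simpa using ha
  have hABne : ∀ (i : Fin m) (j : Fin n), A i - B j ≠ 0 :=
    fun i j => sub_ne_zero.2 (hAB i j)
  have hhb : (∏ j ∈ B₀, (A a - B j)) ≠ 0 :=
    Finset.prod_ne_zero_iff.2 fun j _ => hABne a j
  have hγ : (∏ j ∈ B₀ᶜ, (A a - B j)) ≠ 0 :=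
    Finset.prod_ne_zero_iff.2 fun j _ => hABne a j
  have hga : (∏ i ∈ A₀, (A a - A i)) ≠ 0 :=
    Finset.prod_ne_zero_iff.2 fun i hi => sub_ne_zero.2 fun h => haA ((hA h) ▸ hi)
  have hδ : (∏ i' ∈ A₀ᶜ.erase a, (A a - A i')) ≠ 0 :=
    Finset.prod_ne_zero_iff.2 fun i' hi' =>
      sub_ne_zero.2 fun h => (Finset.mem_erase.1 hi').1 (hA h).symm
  have hE' : (∏ i ∈ A₀, ∏ i' ∈ A₀ᶜ.erase a, (A i - A i')) ≠ 0 :=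
    Finset.prod_ne_zero_iff.2 fun i hi => Finset.prod_ne_zero_iff.2 fun i' hi' =>
      sub_ne_zero.2 fun h =>
        (Finset.mem_compl.1 (Finset.mem_of_mem_erase hi')) ((hA h) ▸ hi)
  have hRBB0 : (∏ j ∈ B₀, ∏ j' ∈ B₀ᶜ, (B j - B j')) ≠ 0 :=
    Finset.prod_ne_zero_iff.2 fun j hj => Finset.prod_ne_zero_iff.2 fun j' hj' =>
      sub_ne_zero.2 fun h => (Finset.mem_compl.1 hj') ((hB h) ▸ hj)
  have hK2 : (∏ i ∈ A₀ᶜ, ∏ j ∈ B₀ᶜ, (A i - B j))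
      = (∏ j ∈ B₀ᶜ, (A a - B j)) * ∏ i ∈ A₀ᶜ.erase a, ∏ j ∈ B₀ᶜ, (A i - B j) :=
    (Finset.mul_prod_erase A₀ᶜ _ ha).symm
  have hN1 : (∏ i ∈ A₀, ∏ i' ∈ A₀ᶜ, (A i - A i'))
      = (∏ i ∈ A₀, (A i - A a)) * ∏ i ∈ A₀, ∏ i' ∈ A₀ᶜ.erase a, (A i - A i') := by
    rw [← Finset.prod_mul_distrib]
    exact Finset.prod_congr rfl fun i _ => (Finset.mul_prod_erase _ _ ha).symm
  have hsub : A₀ ⊆ (univ : Finset (Fin m)).erase a :=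
    fun x hx => Finset.mem_erase.2 ⟨fun hxa => haA (hxa ▸ hx), Finset.mem_univ _⟩
  have hsd : ((univ : Finset (Fin m)).erase a) \ A₀ = A₀ᶜ.erase a := by
    ext x
    simp only [Finset.mem_sdiff, Finset.mem_erase, Finset.mem_univ, and_true,
      Finset.mem_compl]
  have hD : (∏ t ∈ (univ : Finset (Fin m ⊕ Fin n)).erase (Sum.inl a),
        (A a - Sum.elim A B t))
      = ((∏ i ∈ A₀, (A a - A i)) * (∏ i' ∈ A₀ᶜ.erase a, (A a - A i')))
        * ((∏ j ∈ B₀, (A a - B j)) * ∏ j ∈ B₀ᶜ, (A a - B j)) := by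
    rw [erase_inl a (fun t => A a - Sum.elim A B t)]
    simp only [Sum.elim_inl, Sum.elim_inr]
    rw [← Finset.prod_mul_prod_compl B₀ (fun j => A a - B j),
      ← Finset.prod_sdiff hsub, hsd]
    ring
  have hsign1 : (∏ i ∈ A₀, (A i - A a)) = (-1)^A₀.card * ∏ i ∈ A₀, (A a - A i) := by
    rw [prod_neg' A₀ (fun i => A i - A a)]
    congr 1
    exact Finset.prod_congr rfl fun i _ => by ring
  rw [trm]
  simp only [Finset.compl_insert, Finset.prod_insert haA]
  rw [hK2, hN1, hD, hsign1]
  have hsc : (∏ j ∈ B₀, (A a - B j)) * (∏ i ∈ A₀, ∏ j ∈ B₀, (A i - B j))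
        * (∏ i ∈ A₀ᶜ.erase a, ∏ j ∈ B₀ᶜ, (A i - B j))
        / ((∏ i' ∈ A₀ᶜ.erase a, (A a - A i'))
            * (∏ i ∈ A₀, ∏ i' ∈ A₀ᶜ.erase a, (A i - A i'))
          * (∏ j ∈ B₀, ∏ j' ∈ B₀ᶜ, (B j - B j')))
      = (-1)^A₀.card
          * ((∏ i ∈ A₀, ∏ j ∈ B₀, (A i - B j))
            * ((∏ j ∈ B₀ᶜ, (A a - B j)) * ∏ i ∈ A₀ᶜ.erase a, ∏ j ∈ B₀ᶜ, (A i - B j))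
            / ((((-1)^A₀.card * ∏ i ∈ A₀, (A a - A i))
                * ∏ i ∈ A₀, ∏ i' ∈ A₀ᶜ.erase a, (A i - A i'))
              * (∏ j ∈ B₀, ∏ j' ∈ B₀ᶜ, (B j - B j'))))
          * (((∏ i ∈ A₀, (A a - A i)) * ∏ j ∈ B₀, (A a - B j))^2
            / (((∏ i ∈ A₀, (A a - A i)) * (∏ i' ∈ A₀ᶜ.erase a, (A a - A i')))
              * ((∏ j ∈ B₀, (A a - B j)) * ∏ j ∈ B₀ᶜ, (A a - B j)))) := by
    rcases Nat.even_or_odd A₀.card with h1 | h1 <;>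
      simp only [h1.neg_one_pow] <;> field_simp <;> ring
  rw [hsc]
  simp only [_root_.map_mul]
  ring

lemma core (hA : Function.Injective A) (hB : Function.Injective B)
    (hAB : ∀ i j, A i ≠ B j) (A₀ : Finset (Fin m)) (B₀ : Finset (Fin n))
    (hcard : 2 * (A₀.card + B₀.card) + 3 ≤ m + n) :
    ∑ b ∈ B₀ᶜ, trm A B A₀ (insert b B₀)
      = C ((-1:F)^(A₀ᶜ.card + B₀.card + 1)) * ∑ a ∈ A₀ᶜ, trm A B (insert a A₀) B₀ := by
  rw [Finset.sum_congr rfl (fun b hb => key_b A B hA hB hAB A₀ B₀ b hb),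
    Finset.sum_congr rfl (fun a ha => key_a A B hA hB hAB A₀ B₀ a ha),
    ← Finset.mul_sum, ← Finset.mul_sum, ← Finset.mul_sum, ← Finset.mul_sum,
    central A B hA hB hAB A₀ B₀ hcard]
  have hsgn : C ((-1:F)^(A₀ᶜ.card + B₀.card + 1))
        * C ((-1:F)^A₀.card
          * ((∏ i ∈ A₀, ∏ j ∈ B₀, (A i - B j)) * (∏ i ∈ A₀ᶜ, ∏ j ∈ B₀ᶜ, (A i - B j))
            / ((∏ i ∈ A₀, ∏ i' ∈ A₀ᶜ, (A i - A i')) * (∏ j ∈ B₀, ∏ j' ∈ B₀ᶜ, (B j - B j')))))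
      = - C ((-1:F)^(A₀.card + A₀ᶜ.card + B₀.card)
          * ((∏ i ∈ A₀, ∏ j ∈ B₀, (A i - B j)) * (∏ i ∈ A₀ᶜ, ∏ j ∈ B₀ᶜ, (A i - B j))
            / ((∏ i ∈ A₀, ∏ i' ∈ A₀ᶜ, (A i - A i')) * (∏ j ∈ B₀, ∏ j' ∈ B₀ᶜ, (B j - B j'))))) := by
    rw [← _root_.map_mul, ← _root_.map_neg]
    congr 1
    rw [pow_add, pow_add, pow_add, pow_add, pow_one]
    ring
  linear_combination (-((((∏ i ∈ A₀, (X - C (A i))) * ∏ j ∈ B₀, (X - C (B j)))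
    * ∑ a ∈ A₀ᶜ, ((X - C (A a)) * C ((((∏ i ∈ A₀, (A a - A i)) * ∏ j ∈ B₀, (A a - B j))^2)
        / ∏ t ∈ (univ : Finset (Fin m ⊕ Fin n)).erase (Sum.inl a), (A a - Sum.elim A B t)))))) * hsgn


lemma step (hA : Function.Injective A) (hB : Function.Injective B)
    (hAB : ∀ i j, A i ≠ B j) (p qm1 : ℕ) (hcard : 2 * (p + qm1) + 3 ≤ m + n) :
    C (((qm1+1 : ℕ) : F)) * sylv A B p (qm1+1)
      = C ((-1:F)^(m - p + qm1 + 1)) * (C (((p+1 : ℕ) : F)) * sylv A B (p+1) qm1) := by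
  have hq : ∀ (S : F[X]) (k : ℕ), C ((k : ℕ) : F) * S = k • S := by
    intro S k
    rw [nsmul_eq_mul, ← Polynomial.C_eq_natCast]
  rw [sylv_eq, sylv_eq, hq, Finset.smul_sum]
  have hstep1 : ∀ A₀ ∈ powersetCard p (univ : Finset (Fin m)),
      (qm1+1) • ∑ B' ∈ powersetCard (qm1+1) (univ : Finset (Fin n)), trm A B A₀ B'
        = C ((-1:F)^(m - p + qm1 + 1))
          * ∑ B₀ ∈ powersetCard qm1 (univ : Finset (Fin n)),
              ∑ a ∈ A₀ᶜ, trm A B (insert a A₀) B₀ := by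
    intro A₀ hA₀
    have hcA : A₀.card = p := Finset.mem_powersetCard_univ.1 hA₀
    rw [Finset.smul_sum, Finset.sum_congr rfl
        (fun B' _ => rfl : ∀ B' ∈ powersetCard (qm1+1) (univ : Finset (Fin n)),
          (qm1+1) • trm A B A₀ B' = (qm1+1) • trm A B A₀ B'),
      regroup qm1 (trm A B A₀), Finset.mul_sum]
    apply Finset.sum_congr rfl
    intro B₀ hB₀
    have hcB : B₀.card = qm1 := Finset.mem_powersetCard_univ.1 hB₀
    rw [core A B hA hB hAB A₀ B₀ (by rw [hcA, hcB]; omega)]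
    congr 2
    rw [Finset.card_compl, hcA, hcB, Fintype.card_fin]
  rw [Finset.sum_congr rfl hstep1, ← Finset.mul_sum]
  conv_lhs => rw [Finset.sum_comm]
  conv_rhs => rw [hq, Finset.sum_comm, Finset.smul_sum]
  congr 1
  apply Finset.sum_congr rfl
  intro B₀ _
  rw [← regroup p (fun A' => trm A B A' B₀), Finset.smul_sum]



end main

/-- for admissible d and 0 ≤ p, p' ≤ d (with q = d−p, q' = d−p'),
(−1)^{p(m−d)} Sylv^{p,q}/C(d,p) = (−1)^{p'(m−d)} Sylv^{p',q'}/C(d,p');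
in particular C(d,p)·Sylv^{d,0} = (−1)^{(d−p)(m−d)}·Sylv^{p,d−p}. -/
theorem stmt14 {F : Type*} [Field F] [CharZero F] (m n d p p' : ℕ)
    (A : Fin m → F) (B : Fin n → F)
    (hA : Function.Injective A) (hB : Function.Injective B)
    (hAB : ∀ i j, A i ≠ B j)
    (hp : p ≤ d) (hp' : p' ≤ d)
    (hd : d < min m n ∨ (m ≠ n ∧ d = min m n)) :
    C ((-1 : F) ^ (p * (m - d)) / (d.choose p : F)) * sylv A B p (d - p) =
        C ((-1 : F) ^ (p' * (m - d)) / (d.choose p' : F)) * sylv A B p' (d - p') ∧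
      C ((d.choose p : F)) * sylv A B d 0 =
        C ((-1 : F) ^ ((d - p) * (m - d))) * sylv A B p (d - p) := by
  have hdm : d ≤ m := by rcases hd with h | ⟨h1, h2⟩ <;> omega
  have hdn : d ≤ n := by rcases hd with h | ⟨h1, h2⟩ <;> omega
  have h2d : 2 * d + 1 ≤ m + n := by rcases hd with h | ⟨h1, h2⟩ <;> omega
  have adjacent : ∀ p₀, p₀ + 1 ≤ d →
      C ((-1 : F) ^ (p₀ * (m - d)) / (d.choose p₀ : F)) * sylv A B p₀ (d - p₀) =
        C ((-1 : F) ^ ((p₀+1) * (m - d)) / (d.choose (p₀+1) : F))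
          * sylv A B (p₀+1) (d - (p₀+1)) := by
    intro p₀ hp1
    have hqe : d - p₀ = (d - p₀ - 1) + 1 := by omega
    have hst := step A B hA hB hAB p₀ (d - p₀ - 1) (by omega)
    rw [← hqe] at hst
    have hd1 : d - (p₀+1) = d - p₀ - 1 := by omega
    rw [hd1]
    have hcp : (d.choose p₀ : F) ≠ 0 := by
      exact_mod_cast Nat.cast_ne_zero.2 (Nat.choose_pos (by omega : p₀ ≤ d)).ne'
    have hcp1 : (d.choose (p₀+1) : F) ≠ 0 := by
      exact_mod_cast Nat.cast_ne_zero.2 (Nat.choose_pos (by omega : p₀+1 ≤ d)).ne'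
    have hq0 : ((d - p₀ : ℕ) : F) ≠ 0 := Nat.cast_ne_zero.2 (by omega)
    have hsgn2 : (-1:F)^(p₀*(m-d)) * (-1)^(m - p₀ + (d - p₀ - 1) + 1)
        = (-1)^((p₀+1)*(m-d)) := by
      rw [← pow_add]
      apply negpow_congr
      rw [add_mul, one_mul]
      generalize p₀ * (m - d) = k
      omega
    have hch : ((d.choose (p₀+1) : F)) * ((p₀+1 : ℕ) : F)
        = (d.choose p₀ : F) * ((d - p₀ : ℕ) : F) := by
      exact_mod_cast congrArg (fun x : ℕ => (x : F)) (Nat.choose_succ_right_eq d p₀)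
    have hscal : ((-1:F)^(p₀*(m-d)) / (d.choose p₀ : F))
          * ((-1:F)^(m - p₀ + (d - p₀ - 1) + 1) * ((p₀+1 : ℕ) : F))
        = ((d - p₀ : ℕ) : F) * ((-1:F)^((p₀+1)*(m-d)) / (d.choose (p₀+1) : F)) := by
      calc ((-1:F)^(p₀*(m-d)) / (d.choose p₀ : F))
            * ((-1:F)^(m - p₀ + (d - p₀ - 1) + 1) * ((p₀+1 : ℕ) : F))
          = ((-1:F)^(p₀*(m-d)) * (-1:F)^(m - p₀ + (d - p₀ - 1) + 1)) * ((p₀+1 : ℕ) : F)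
              / (d.choose p₀ : F) := by ring
        _ = (-1:F)^((p₀+1)*(m-d)) * ((p₀+1 : ℕ) : F) / (d.choose p₀ : F) := by rw [hsgn2]
        _ = ((d - p₀ : ℕ) : F) * ((-1:F)^((p₀+1)*(m-d)) / (d.choose (p₀+1) : F)) := by
            push_cast at hch ⊢
            field_simp
            linear_combination hch
    apply mul_left_cancel₀ (Polynomial.C_ne_zero.mpr hq0)
    calc C ((d - p₀ : ℕ) : F) * (C ((-1 : F) ^ (p₀ * (m - d)) / (d.choose p₀ : F))
            * sylv A B p₀ (d - p₀))
        = C ((-1 : F) ^ (p₀ * (m - d)) / (d.choose p₀ : F))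
            * (C ((d - p₀ : ℕ) : F) * sylv A B p₀ (d - p₀)) := by ring
      _ = C ((-1 : F) ^ (p₀ * (m - d)) / (d.choose p₀ : F))
            * (C ((-1:F)^(m - p₀ + (d - p₀ - 1) + 1))
              * (C ((p₀+1 : ℕ) : F) * sylv A B (p₀+1) (d - p₀ - 1))) := by rw [hst]
      _ = C (((-1:F)^(p₀*(m-d)) / (d.choose p₀ : F))
            * ((-1:F)^(m - p₀ + (d - p₀ - 1) + 1) * ((p₀+1 : ℕ) : F)))
              * sylv A B (p₀+1) (d - p₀ - 1) := by
          simp only [_root_.map_mul]; ring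
      _ = C (((d - p₀ : ℕ) : F) * ((-1:F)^((p₀+1)*(m-d)) / (d.choose (p₀+1) : F)))
              * sylv A B (p₀+1) (d - p₀ - 1) := by rw [hscal]
      _ = C ((d - p₀ : ℕ) : F) * (C ((-1 : F) ^ ((p₀+1) * (m - d)) / (d.choose (p₀+1) : F))
              * sylv A B (p₀+1) (d - p₀ - 1)) := by
          simp only [_root_.map_mul]; ring
  have chain : ∀ k p₀, p₀ + k = d →
      C ((-1 : F) ^ (p₀ * (m - d)) / (d.choose p₀ : F)) * sylv A B p₀ (d - p₀) =
        C ((-1 : F) ^ (d * (m - d)) / (d.choose d : F)) * sylv A B d (d - d) := by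
    intro k
    induction k with
    | zero => intro p₀ h; rw [show p₀ = d from by omega]
    | succ k ih =>
        intro p₀ h
        rw [adjacent p₀ (by omega)]
        exact ih (p₀+1) (by omega)
  have part1 : ∀ p₀, p₀ ≤ d →
      C ((-1 : F) ^ (p₀ * (m - d)) / (d.choose p₀ : F)) * sylv A B p₀ (d - p₀) =
        C ((-1 : F) ^ (d * (m - d)) / (d.choose d : F)) * sylv A B d (d - d) :=
    fun p₀ h => chain (d - p₀) p₀ (by omega)
  constructor
  · exact (part1 p hp).trans (part1 p' hp').symm
  · have e1 := part1 p hp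
    rw [Nat.sub_self, Nat.choose_self, Nat.cast_one, div_one] at e1
    have hcp : (d.choose p : F) ≠ 0 := by
      exact_mod_cast Nat.cast_ne_zero.2 (Nat.choose_pos hp).ne'
    have hkey : (d.choose p : F) * ((-1:F)^(p*(m-d)) / (d.choose p : F))
        = (-1:F)^((d-p)*(m-d)) * (-1:F)^(d*(m-d)) := by
      rw [mul_div_cancel₀ _ hcp, ← pow_add]
      apply negpow_congr
      obtain ⟨k, hk⟩ : ∃ k, d = p + k := ⟨d - p, by omega⟩
      subst hk
      rw [Nat.add_sub_cancel_left, add_mul]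
      generalize k * (m - (p + k)) = x
      generalize p * (m - (p + k)) = y
      omega
    have hss : ((-1:F)^(d*(m-d))) * ((-1:F)^(d*(m-d))) = 1 := by
      rw [← pow_add]
      have h0 : ∀ x : ℕ, ((-1:F))^(x+x) = 1 := fun x => by
        rw [negpow_congr (by omega : (x+x) % 2 = 0 % 2), pow_zero]
      exact h0 _
    have hkey2 : (d.choose p : F) * ((-1:F)^(p*(m-d)) / (d.choose p : F)) * ((-1:F)^(d*(m-d)))
        = (-1:F)^((d-p)*(m-d)) := by
      rw [hkey, mul_assoc, hss, mul_one]
    calc C ((d.choose p : F)) * sylv A B d 0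
        = C ((d.choose p : F)) * (C ((-1:F)^(d*(m-d))) * sylv A B d 0)
            * C ((-1:F)^(d*(m-d))) := by
          have hCs : C ((-1:F)^(d*(m-d))) * C ((-1:F)^(d*(m-d))) = 1 := by
            rw [← _root_.map_mul, hss, _root_.map_one]
          linear_combination (-(C ((d.choose p : F)) * sylv A B d 0)) * hCs
      _ = C ((d.choose p : F)) * (C ((-1:F)^(p*(m-d)) / (d.choose p : F))
            * sylv A B p (d - p)) * C ((-1:F)^(d*(m-d))) := by rw [← e1]
      _ = C ((d.choose p : F) * ((-1:F)^(p*(m-d)) / (d.choose p : F)) * ((-1:F)^(d*(m-d))))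
            * sylv A B p (d - p) := by simp only [_root_.map_mul]; ring
      _ = C ((-1 : F) ^ ((d - p) * (m - d))) * sylv A B p (d - p) := by rw [hkey2]
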